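/- Let φ : ℝ → ℝ be continuously differentiable with φ′ ∈ L²(ℝ), and for j ∈ ℤ set Φ_j = ∫_{x_{j−1/2}}^{x_{j+1/2}} φ(x) dx. Then for every j ∈ ℤ, |Φ_j − Φ_{j−1}| ≤ 2Δx^{3/2} (∫_{x_{j−3/2}}^{x_{j+1/2}} |φ′(x)|² dx)^{1/2}; equivalently, |D₋Φ_j| ≤ 2Δx^{1/2} (∫_{x_{j−3/2}}^{x_{j+1/2}} |φ′(x)|² dx)^{1/2}. -/

import Mathlib

open MeasureTheory Filter Set

noncomputable section

/-- The sup-norm `‖g‖_∞` of a function `g : ℝ → ℝ`. -/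
def supNorm (g : ℝ → ℝ) : ℝ := ⨆ x, |g x|

/-- The total variation `TV(k)` of a function `k : ℝ → ℝ`. -/
def totalVar (k : ℝ → ℝ) : ℝ := (eVariationOn k Set.univ).toReal

/-- The Engquist–Osher numerical flux associated to `f`. -/
def eoFlux (f : ℝ → ℝ) (u v : ℝ) : ℝ :=
  (f u + f v) / 2 - (∫ s in u..v, |deriv f s|) / 2

/-- The cell averages `k_{j+1/2} = (1/Δx) ∫_{x_j}^{x_{j+1}} k`. -/
def kAvg (k : ℝ → ℝ) (dx : ℝ) (j : ℤ) : ℝ :=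
  (1 / dx) * ∫ x in ((j : ℝ) * dx)..((j : ℝ) * dx + dx), k x

/-- The sign-adapted Engquist–Osher flux `f̂_{j+1/2}`, with arguments transposed when the
coefficient `kh j` is negative. -/
def signFlux (f : ℝ → ℝ) (kh : ℤ → ℝ) (v : ℤ → ℝ) (j : ℤ) : ℝ :=
  if 0 ≤ kh j then eoFlux f (v j) (v (j + 1)) else eoFlux f (v (j + 1)) (v j)

/-- The numerical flux `h_{j+1/2} = k_{j+1/2} f̂_{j+1/2}`. -/
def numFlux (f k : ℝ → ℝ) (dx : ℝ) (v : ℤ → ℝ) (j : ℤ) : ℝ :=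
  kAvg k dx j * signFlux f (kAvg k dx) v j

/-- Backward difference `D₋v_j = (v_j - v_{j-1})/Δx`. -/
def Dm (dx : ℝ) (v : ℤ → ℝ) (j : ℤ) : ℝ := (v j - v (j - 1)) / dx

/-- Forward difference `D₊v_j = (v_{j+1} - v_j)/Δx`. -/
def Dp (dx : ℝ) (v : ℤ → ℝ) (j : ℤ) : ℝ := (v (j + 1) - v j) / dx

/-- The square of the discrete `ℓ²` norm: `‖v‖² = Δx Σ_j v_j²`. -/
def l2sq (dx : ℝ) (v : ℤ → ℝ) : ℝ := dx * ∑' j : ℤ, (v j) ^ 2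

/-- The fully-discrete capillarity scheme
`D₊ᵗu^n_j + D₋h^n_{j+1/2} = βΔx·D₊D₋u^n_j + γμ(Δx)·D₊ᵗD₊D₋u^n_j`
with initial data the cell averages of `u0`. -/
def capScheme (f k u0 : ℝ → ℝ) (β γ μ dx dt : ℝ) (u : ℕ → ℤ → ℝ) : Prop :=
  (∀ j : ℤ, u 0 j =
      (1 / dx) * ∫ x in ((j : ℝ) * dx - dx / 2)..((j : ℝ) * dx + dx / 2), u0 x) ∧
  ∀ (n : ℕ) (j : ℤ),
    (u (n + 1) j - u n j) / dt + Dm dx (numFlux f k dx (u n)) j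
      = β * dx * Dp dx (Dm dx (u n)) j
        + γ * μ * ((Dp dx (Dm dx (u (n + 1))) j - Dp dx (Dm dx (u n)) j) / dt)

/-- The fully-discrete diffusive–dispersive scheme
`D₊ᵗu^n_j + D₋h^n_{j+1/2} = βΔx·D₊D₋u^n_j + γμ(Δx)·D₊D₋D₋u^n_j`
with initial data the cell averages of `u0`. -/
def ddScheme (f k u0 : ℝ → ℝ) (β γ μ dx dt : ℝ) (u : ℕ → ℤ → ℝ) : Prop :=
  (∀ j : ℤ, u 0 j =
      (1 / dx) * ∫ x in ((j : ℝ) * dx - dx / 2)..((j : ℝ) * dx + dx / 2), u0 x) ∧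
  ∀ (n : ℕ) (j : ℤ),
    (u (n + 1) j - u n j) / dt + Dm dx (numFlux f k dx (u n)) j
      = β * dx * Dp dx (Dm dx (u n)) j
        + γ * μ * Dp dx (Dm dx (Dm dx (u n))) j

/-- The CFL condition for the capillarity scheme. -/
def cflCap (f k : ℝ → ℝ) (β γ μ dx dt δ : ℝ) : Prop :=
  max (2 * max (supNorm f) (max (supNorm (deriv f)) (supNorm k)) + (dt / dx) / 2)
      ((dt / dx) / 2 * (1 + β * dx ^ 2 / (γ * μ)))
    ≤ min (1 - δ) (β - δ)

/-- The explicit CFL condition for the diffusive–dispersive scheme. -/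
def cflDD (f k : ℝ → ℝ) (β γ μ dx dt δ : ℝ) : Prop :=
  max (2 * (dt / dx) * (β ^ 2 * dx ^ 2 / (γ * μ) + 2 * γ * μ / dx ^ 2))
      (8 * (dt / dx) * supNorm k ^ 2 * supNorm (deriv f) ^ 2)
    ≤ min (1 - δ) (β - δ)

/-- The piecewise-constant interpolant `u_{Δx}(x,t) = u^n_j` on
`[x_{j-1/2}, x_{j+1/2}) × [t^n, t^{n+1})`. -/
def pcInterp (dx dt : ℝ) (u : ℕ → ℤ → ℝ) (p : ℝ × ℝ) : ℝ :=
  u (⌊p.2 / dt⌋.toNat) ⌊p.1 / dx + 1 / 2⌋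

/-- Finite support of the grid function at each time level. -/
def finSupp (u : ℕ → ℤ → ℝ) : Prop :=
  ∀ n : ℕ, ∃ J : ℕ, ∀ j : ℤ, (J : ℤ) < |j| → u n j = 0

/-- The `i`-th open interval of the partition of `ℝ` induced by the points `ξ 0 < ⋯ < ξ (M-1)`. -/
def pieceSet (M : ℕ) (ξ : Fin M → ℝ) (i : Fin (M + 1)) : Set ℝ :=
  {x | (∀ m : Fin M, (m : ℕ) < (i : ℕ) → ξ m < x) ∧ (∀ m : Fin M, (i : ℕ) ≤ (m : ℕ) → x < ξ m)}

/-- `k` is piecewise Lipschitz: on each piece of the partition induced by `ξ`, it agrees with a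
globally Lipschitz function (in particular it is Lipschitz on the closure of each piece, up to
redefining it at the partition points). -/
def piecewiseLip (M : ℕ) (ξ : Fin M → ℝ) (k : ℝ → ℝ) : Prop :=
  ∀ i : Fin (M + 1), ∃ (κ : ℝ → ℝ) (L : NNReal),
    LipschitzWith L κ ∧ ∀ x ∈ pieceSet M ξ i, k x = κ x

end


private lemma cs_interval (g : ℝ → ℝ) (hg2 : MemLp g 2 volume) (a b : ℝ) (hab : a ≤ b) :
    ∫ x in a..b, |g x| ≤ Real.sqrt (b - a) * Real.sqrt (∫ x in a..b, (g x) ^ 2) := by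
  set μ := volume.restrict (Set.Ioc a b) with hμ
  haveI : IsFiniteMeasure μ := by
    constructor
    rw [hμ, Measure.restrict_apply_univ]
    exact measure_Ioc_lt_top
  have hpq : (2:ℝ).HolderConjugate 2 := Real.HolderConjugate.two_two
  have h2 : ENNReal.ofReal (2:ℝ) = 2 := by
    rw [ENNReal.ofReal_ofNat]
  have hf : MemLp g (ENNReal.ofReal (2:ℝ)) μ := by
    rw [h2]; exact hg2.restrict _
  have hone : MemLp (fun _ : ℝ => (1:ℝ)) (ENNReal.ofReal (2:ℝ)) μ := by
    rw [h2]; exact memLp_const 1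
  have key := MeasureTheory.integral_mul_norm_le_Lp_mul_Lq (μ := μ) hpq hf hone
  have hrw2 : ∀ x : ℝ, x ^ (2:ℝ) = x ^ (2:ℕ) := fun x => by
    rw [show (2:ℝ) = ((2:ℕ):ℝ) by norm_num, Real.rpow_natCast]
  have hL : ∫ x, ‖g x‖ * ‖(1:ℝ)‖ ∂μ = ∫ x, |g x| ∂μ := by
    simp [Real.norm_eq_abs]
  have hR1 : ∫ x, ‖g x‖ ^ (2:ℝ) ∂μ = ∫ x, (g x) ^ 2 ∂μ := by
    refine integral_congr_ae (Eventually.of_forall fun x => ?_)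
    show ‖g x‖ ^ (2:ℝ) = g x ^ 2
    rw [hrw2, Real.norm_eq_abs, sq_abs]
  have hR2 : ∫ x, ‖(1:ℝ)‖ ^ (2:ℝ) ∂μ = b - a := by
    have : ∀ x : ℝ, ‖(1:ℝ)‖ ^ (2:ℝ) = (1:ℝ) := fun x => by
      rw [hrw2]; norm_num
    simp only [this 0]
    rw [integral_const, smul_eq_mul, mul_one, hμ, measureReal_def, Measure.restrict_apply_univ,
      Real.volume_Ioc, ENNReal.toReal_ofReal (by linarith)]
  rw [hL, hR1, hR2] at key
  have hIoc : ∀ h : ℝ → ℝ, (∫ x in a..b, h x) = ∫ x, h x ∂μ := fun h => by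
    rw [intervalIntegral.integral_of_le hab, hμ]
  rw [hIoc (fun x => |g x|), hIoc (fun x => (g x) ^ 2)]
  calc ∫ x, |g x| ∂μ ≤ (∫ x, (g x) ^ 2 ∂μ) ^ (1/(2:ℝ)) * (b - a) ^ (1/(2:ℝ)) := key
    _ = Real.sqrt (b - a) * Real.sqrt (∫ x, (g x) ^ 2 ∂μ) := by
        rw [← Real.sqrt_eq_rpow, ← Real.sqrt_eq_rpow, mul_comm]

/-- bound on the backward difference of cell averages of a `C¹` function `φ` with
`φ' ∈ L²(ℝ)` in terms of the local `L²` norm of `φ'`. -/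
theorem cellAverage_difference_bound (φ : ℝ → ℝ) (dx : ℝ) (hdx : 0 < dx)
    (hφ : ContDiff ℝ 1 φ)
    (hφ' : MemLp (deriv φ) 2 volume) :
    ∀ j : ℤ,
      |(∫ x in ((j : ℝ) * dx - dx / 2)..((j : ℝ) * dx + dx / 2), φ x) -
          ∫ x in (((j : ℝ) - 1) * dx - dx / 2)..(((j : ℝ) - 1) * dx + dx / 2), φ x|
        ≤ 2 * dx * Real.sqrt dx *
            Real.sqrt (∫ x in ((j : ℝ) * dx - 3 * dx / 2)..((j : ℝ) * dx + dx / 2),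
              (deriv φ x) ^ 2) ∧
      |((∫ x in ((j : ℝ) * dx - dx / 2)..((j : ℝ) * dx + dx / 2), φ x) -
          ∫ x in (((j : ℝ) - 1) * dx - dx / 2)..(((j : ℝ) - 1) * dx + dx / 2), φ x) / dx|
        ≤ 2 * Real.sqrt dx *
            Real.sqrt (∫ x in ((j : ℝ) * dx - 3 * dx / 2)..((j : ℝ) * dx + dx / 2),
              (deriv φ x) ^ 2) := by
  have hcont : Continuous (deriv φ) := hφ.continuous_deriv le_rfl
  have hdφ : Differentiable ℝ φ := hφ.differentiable one_ne_zero
  have hφc : Continuous φ := hφ.continuous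
  intro j
  set a := (j:ℝ) * dx - dx / 2 with ha
  have e1 : ((j:ℝ) - 1) * dx - dx / 2 = a - dx := by rw [ha]; ring
  have e2 : ((j:ℝ) - 1) * dx + dx / 2 = a := by rw [ha]; ring
  have e3 : (j:ℝ) * dx + dx / 2 = a + dx := by rw [ha]; ring
  have e4 : (j:ℝ) * dx - 3 * dx / 2 = a - dx := by rw [ha]; ring
  rw [e1, e2, e3, e4]
  set S := ∫ x in (a - dx)..(a + dx), (deriv φ x) ^ 2 with hS
  set C := ∫ t in (a - dx)..(a + dx), |deriv φ t| with hC
  -- rewrite difference as single integral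
  have hsub : (∫ x in a..(a + dx), φ x) - (∫ x in (a - dx)..a, φ x)
      = ∫ x in a..(a + dx), (φ x - φ (x - dx)) := by
    have hint2 : IntervalIntegrable (fun x => φ (x - dx)) volume a (a + dx) :=
      (hφc.comp (by continuity : Continuous fun x : ℝ => x - dx)).intervalIntegrable _ _
    rw [intervalIntegral.integral_sub (hφc.intervalIntegrable _ _) hint2]
    congr 1
    rw [intervalIntegral.integral_comp_sub_right (fun x => φ x) dx]
    congr 1 <;> ring
  -- pointwise bound
  have hpt : ∀ x ∈ Set.uIoc a (a + dx), ‖φ x - φ (x - dx)‖ ≤ C := by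
    intro x hx
    rw [Set.uIoc_of_le (by linarith)] at hx
    obtain ⟨hx1, hx2⟩ := hx
    have hftc : ∫ t in (x - dx)..x, deriv φ t = φ x - φ (x - dx) :=
      intervalIntegral.integral_deriv_eq_sub (fun t _ => hdφ t)
        (hcont.intervalIntegrable _ _)
    rw [Real.norm_eq_abs, ← hftc]
    calc |∫ t in (x - dx)..x, deriv φ t| ≤ ∫ t in (x - dx)..x, |deriv φ t| :=
          intervalIntegral.abs_integral_le_integral_abs (by linarith)
      _ ≤ C :=
          intervalIntegral.integral_mono_interval (by linarith) (by linarith) (by linarith)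
            (Eventually.of_forall fun t => abs_nonneg _)
            ((hcont.abs).intervalIntegrable _ _)
  have hbound : |(∫ x in a..(a + dx), φ x) - ∫ x in (a - dx)..a, φ x| ≤ C * dx := by
    rw [hsub]
    have := intervalIntegral.norm_integral_le_of_norm_le_const hpt
    rwa [Real.norm_eq_abs, show a + dx - a = dx by ring, abs_of_pos hdx] at this
  -- Cauchy–Schwarz
  have hCS : C ≤ Real.sqrt (2 * dx) * Real.sqrt S := by
    have := cs_interval (deriv φ) hφ' (a - dx) (a + dx) (by linarith)
    rwa [show a + dx - (a - dx) = 2 * dx by ring] at this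
  have hsq2 : Real.sqrt 2 ≤ 2 := by
    nlinarith [Real.sq_sqrt (by norm_num : (0:ℝ) ≤ 2), Real.sqrt_nonneg 2]
  have hC2 : C ≤ 2 * Real.sqrt dx * Real.sqrt S := by
    calc C ≤ Real.sqrt (2 * dx) * Real.sqrt S := hCS
      _ = Real.sqrt 2 * Real.sqrt dx * Real.sqrt S := by
          rw [Real.sqrt_mul (by norm_num : (0:ℝ) ≤ 2)]
      _ ≤ 2 * Real.sqrt dx * Real.sqrt S := by
          exact mul_le_mul_of_nonneg_right
            (mul_le_mul_of_nonneg_right hsq2 (Real.sqrt_nonneg _)) (Real.sqrt_nonneg _)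
  have hmain : |(∫ x in a..(a + dx), φ x) - ∫ x in (a - dx)..a, φ x|
      ≤ 2 * dx * Real.sqrt dx * Real.sqrt S := by
    calc |(∫ x in a..(a + dx), φ x) - ∫ x in (a - dx)..a, φ x| ≤ C * dx := hbound
      _ ≤ (2 * Real.sqrt dx * Real.sqrt S) * dx := by
          exact mul_le_mul_of_nonneg_right hC2 hdx.le
      _ = 2 * dx * Real.sqrt dx * Real.sqrt S := by ring
  refine ⟨hmain, ?_⟩
  rw [abs_div, abs_of_pos hdx, div_le_iff₀ hdx]
  calc |(∫ x in a..(a + dx), φ x) - ∫ x in (a - dx)..a, φ x|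
      ≤ 2 * dx * Real.sqrt dx * Real.sqrt S := hmain
    _ = 2 * Real.sqrt dx * Real.sqrt S * dx := by ring
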